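/- Assume in addition that g is locally Hölder continuous of some order β ∈ (0, H). Let β₀ = sup{t ≥ 0 : X_s > 0 for all s ∈ [0,t]} be the right endpoint of the connected component of {t ≥ 0 : X_t > 0} containing 0. Then for every t ∈ [0, β₀] ∩ [0,∞), X_t = X₀ + a∫₀^t s^{2H−1}/X_s ds − b∫₀^t X_s ds + σ g(t), and if β₀ < ∞ then lim_{t↑β₀} X_t = 0 = X_{β₀}. -/

import Mathlib

open MeasureTheory Filter Set

/-- `X` is a continuous solution on `[0,T]` of the ε-approximating equation
`X_t = X₀ + a ∫₀ᵗ (s+ε)^{2H-1} / (X_s 1_{X_s>0} + ε) ds − b ∫₀ᵗ X_s ds + σ g(t)`. -/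
def approxSol (X₀ a b σ H : ℝ) (g : ℝ → ℝ) (T ε : ℝ) (X : ℝ → ℝ) : Prop :=
  ContinuousOn X (Set.Icc 0 T) ∧
    ∀ t ∈ Set.Icc (0:ℝ) T,
      X t = X₀ + a * (∫ s in (0:ℝ)..t,
            (s + ε) ^ (2 * H - 1) / ((if 0 < X s then X s else 0) + ε))
          - b * (∫ s in (0:ℝ)..t, X s) + σ * g t

section CIRAux

/-- Bundle of all standing data and hypotheses. -/
lemma ite_max (x : ℝ) : (if 0 < x then x else 0) = max x 0 := by
  rcases le_or_gt x 0 with h | h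
  · simp [not_lt.2 h, max_eq_right h]
  · simp [h, max_eq_left h.le]

structure CIRSetup where
  X0 : ℝ
  a : ℝ
  b : ℝ
  sg : ℝ
  H : ℝ
  g : ℝ → ℝ
  Xe : ℝ → ℝ → ℝ
  X : ℝ → ℝ
  hX0 : 0 < X0
  ha : 0 < a
  hb : 0 ≤ b
  hsg : 0 < sg
  hH0 : 0 < H
  hH : H < 1/2
  hgc : ContinuousOn g (Set.Ici 0)
  hg0 : g 0 = 0
  hXe : ∀ ε > (0:ℝ), ∀ T > (0:ℝ), approxSol X0 a b sg H g T ε (Xe ε)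
  hX : ∀ t ≥ (0:ℝ), Tendsto (fun ε => Xe ε t) (nhdsWithin 0 (Set.Ioi 0)) (nhds (X t))

namespace CIRSetup

variable (S : CIRSetup)

/-- the exponent -/
noncomputable def p : ℝ := 2 * S.H - 1

/-- truncated approximations, defined on all of `ℝ` -/
noncomputable def Z (ε s : ℝ) : ℝ := S.Xe ε (max s 0)

/-- truncated limit -/
noncomputable def Xb (s : ℝ) : ℝ := S.X (max s 0)

/-- the approximating integrand -/
noncomputable def F (ε s : ℝ) : ℝ := (s + ε) ^ S.p / (max (S.Z ε s) 0 + ε)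

lemma hp1 : (-1:ℝ) < S.p := by have := S.hH0; unfold p; linarith

lemma hp0 : S.p < 0 := by have := S.hH; unfold p; linarith

lemma contXe {ε : ℝ} (hε : 0 < ε) : ContinuousOn (S.Xe ε) (Ici 0) := by
  intro x hx
  have hx0 : (0:ℝ) ≤ x := hx
  have h := (S.hXe ε hε (x + 1) (by linarith)).1
  have hc : ContinuousWithinAt (S.Xe ε) (Icc 0 (x+1)) x :=
    h x ⟨hx0, by linarith⟩
  refine hc.mono_of_mem_nhdsWithin ?_
  have : Ici (0:ℝ) ∩ Iio (x+1) ⊆ Icc 0 (x+1) := fun y hy => ⟨hy.1, hy.2.le⟩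
  exact Filter.mem_of_superset (inter_mem_nhdsWithin _ (Iio_mem_nhds (by linarith))) this

lemma contZ {ε : ℝ} (hε : 0 < ε) : Continuous (S.Z ε) :=
  (S.contXe hε).comp_continuous (continuous_id.max continuous_const)
    (fun x => le_max_right x 0)

lemma eqnZ {ε : ℝ} (hε : 0 < ε) {t : ℝ} (ht : 0 ≤ t) :
    S.Z ε t = S.X0 + S.a * (∫ s in (0:ℝ)..t, S.F ε s)
      - S.b * (∫ s in (0:ℝ)..t, S.Z ε s) + S.sg * S.g t := by
  obtain ⟨hc, heq⟩ := S.hXe ε hε (t + 1) (by linarith)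
  have h := heq t ⟨ht, by linarith⟩
  have hZt : S.Z ε t = S.Xe ε t := by unfold Z; rw [max_eq_left ht]
  rw [hZt, h]
  have huIcc : uIcc (0:ℝ) t = Icc 0 t := uIcc_of_le ht
  have h1 : ∫ s in (0:ℝ)..t,
      (s + ε) ^ (2 * S.H - 1) / ((if 0 < S.Xe ε s then S.Xe ε s else 0) + ε)
      = ∫ s in (0:ℝ)..t, S.F ε s := by
    apply intervalIntegral.integral_congr
    intro s hs
    rw [huIcc] at hs
    have hs0 : (0:ℝ) ≤ s := hs.1
    unfold F Z p
    simp only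
    rw [max_eq_left hs0, ite_max]
  have h2 : ∫ s in (0:ℝ)..t, S.Xe ε s = ∫ s in (0:ℝ)..t, S.Z ε s := by
    apply intervalIntegral.integral_congr
    intro s hs
    rw [huIcc] at hs
    unfold Z; rw [max_eq_left hs.1]
  rw [h1, h2]

lemma Z0 {ε : ℝ} (hε : 0 < ε) : S.Z ε 0 = S.X0 := by
  have := S.eqnZ hε (le_refl (0:ℝ))
  simpa [intervalIntegral.integral_same, S.hg0] using this

lemma FcontOn {ε : ℝ} (hε : 0 < ε) : ContinuousOn (S.F ε) (Ici 0) := by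
  intro s hs
  have hs0 : (0:ℝ) ≤ s := hs
  have hnum : ContinuousAt (fun x : ℝ => (x + ε) ^ S.p) s := by
    have h1 : ContinuousAt (fun x : ℝ => x ^ S.p) (s + ε) :=
      Real.continuousAt_rpow_const _ _ (Or.inl (by positivity))
    have h2 : ContinuousAt (fun x : ℝ => x + ε) s := continuousAt_id.add continuousAt_const
    exact ContinuousAt.comp (x := s) (g := fun x : ℝ => x ^ S.p) h1 h2
  have hden : ContinuousAt (fun x : ℝ => max (S.Z ε x) 0 + ε) s :=
    (((S.contZ hε).max continuous_const).add continuous_const).continuousAt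
  have hden0 : max (S.Z ε s) 0 + ε ≠ 0 := by positivity
  exact ((hnum.div hden hden0)).continuousWithinAt

lemma FInt {ε : ℝ} (hε : 0 < ε) {t₁ t₂ : ℝ} (h1 : 0 ≤ t₁) (h2 : 0 ≤ t₂) :
    IntervalIntegrable (S.F ε) volume t₁ t₂ := by
  apply ContinuousOn.intervalIntegrable
  apply (S.FcontOn hε).mono
  intro x hx
  have := hx.1
  simp only [uIcc, mem_Icc] at hx
  exact le_trans (le_min h1 h2) hx.1

lemma ZInt {ε : ℝ} (hε : 0 < ε) (t₁ t₂ : ℝ) :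
    IntervalIntegrable (S.Z ε) volume t₁ t₂ :=
  (S.contZ hε).intervalIntegrable t₁ t₂

lemma Fnonneg {ε : ℝ} (hε : 0 < ε) {s : ℝ} (hs : 0 ≤ s) : 0 ≤ S.F ε s := by
  unfold F
  apply div_nonneg (Real.rpow_nonneg (by linarith) _) (by positivity)

end CIRSetup

end CIRAux
namespace CIRSetup

variable (S : CIRSetup)

lemma Zmax (ε t : ℝ) : S.Z ε t = S.Z ε (max t 0) := by
  unfold Z
  rw [max_assoc, max_self]

lemma mono_eps {ε₁ ε₂ : ℝ} (h1 : 0 < ε₁) (h12 : ε₁ ≤ ε₂) (t : ℝ) :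
    S.Z ε₂ t ≤ S.Z ε₁ t := by
  have h2 : 0 < ε₂ := lt_of_lt_of_le h1 h12
  rw [S.Zmax ε₁ t, S.Zmax ε₂ t]
  set t' := max t 0 with ht'
  have ht0 : 0 ≤ t' := le_max_right _ _
  by_contra hcon
  push_neg at hcon
  set D : ℝ → ℝ := fun s => S.Z ε₂ s - S.Z ε₁ s with hD
  have hDc : Continuous D := (S.contZ h2).sub (S.contZ h1)
  set Sset : Set ℝ := Icc 0 t' ∩ D ⁻¹' (Iic 0) with hSset
  have hclosed : IsClosed Sset := isClosed_Icc.inter (isClosed_Iic.preimage hDc)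
  have hne : (0:ℝ) ∈ Sset := by
    constructor
    · exact ⟨le_refl _, ht0⟩
    · simp only [mem_preimage, mem_Iic, hD]
      rw [S.Z0 h1, S.Z0 h2]
      simp
  have hbdd : BddAbove Sset := BddAbove.mono inter_subset_left bddAbove_Icc
  set u := sSup Sset with hu'
  have hu : u ∈ Sset := hclosed.csSup_mem ⟨0, hne⟩ hbdd
  have hu0 : 0 ≤ u := hu.1.1
  have hut : u ≤ t' := hu.1.2
  have hDu : D u ≤ 0 := hu.2
  have hkey : ∀ s, u < s → s ≤ t' → 0 < D s := by
    intro s hus hst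
    by_contra hns
    push_neg at hns
    have hmem : s ∈ Sset := ⟨⟨le_trans hu0 hus.le, hst⟩, hns⟩
    exact absurd (le_csSup hbdd hmem) (not_le.2 hus)
  have hDt : 0 < D t' := by simp [hD]; linarith
  have hult : u < t' := by
    rcases lt_or_eq_of_le hut with h | h
    · exact h
    · rw [h] at hDu; linarith
  -- the four equations
  have e1t := S.eqnZ h1 ht0
  have e1u := S.eqnZ h1 hu0
  have e2t := S.eqnZ h2 ht0
  have e2u := S.eqnZ h2 hu0
  -- interval splitting
  have hF1 : (∫ s in (0:ℝ)..t', S.F ε₁ s) - (∫ s in (0:ℝ)..u, S.F ε₁ s)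
      = ∫ s in u..t', S.F ε₁ s :=
    intervalIntegral.integral_interval_sub_left (S.FInt h1 le_rfl ht0) (S.FInt h1 le_rfl hu0)
  have hF2 : (∫ s in (0:ℝ)..t', S.F ε₂ s) - (∫ s in (0:ℝ)..u, S.F ε₂ s)
      = ∫ s in u..t', S.F ε₂ s :=
    intervalIntegral.integral_interval_sub_left (S.FInt h2 le_rfl ht0) (S.FInt h2 le_rfl hu0)
  have hZ1 : (∫ s in (0:ℝ)..t', S.Z ε₁ s) - (∫ s in (0:ℝ)..u, S.Z ε₁ s)
      = ∫ s in u..t', S.Z ε₁ s :=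
    intervalIntegral.integral_interval_sub_left (S.ZInt h1 0 t') (S.ZInt h1 0 u)
  have hZ2 : (∫ s in (0:ℝ)..t', S.Z ε₂ s) - (∫ s in (0:ℝ)..u, S.Z ε₂ s)
      = ∫ s in u..t', S.Z ε₂ s :=
    intervalIntegral.integral_interval_sub_left (S.ZInt h2 0 t') (S.ZInt h2 0 u)
  have hne_ae : ∀ᵐ (s : ℝ) ∂(MeasureTheory.volume), s ≠ u := by
    simp [MeasureTheory.ae_iff, Real.volume_singleton]
  -- integrand comparison on (u, t']
  have hIle : (∫ s in u..t', S.F ε₂ s) ≤ ∫ s in u..t', S.F ε₁ s := by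
    apply intervalIntegral.integral_mono_ae_restrict hult.le
      (S.FInt h2 hu0 ht0) (S.FInt h1 hu0 ht0)
    refine (MeasureTheory.ae_restrict_iff' measurableSet_Icc).mpr ?_
    filter_upwards [hne_ae] with s hsne hsmem
    have hus : u < s := lt_of_le_of_ne hsmem.1 (Ne.symm hsne)
    have hs0 : 0 < s := lt_of_le_of_lt hu0 hus
    have hDs : S.Z ε₁ s < S.Z ε₂ s := by have := hkey s hus hsmem.2; simp [hD] at this; linarith
    unfold F
    apply div_le_div₀ (Real.rpow_nonneg (by linarith) _)
      (Real.rpow_le_rpow_of_nonpos (by linarith) (by linarith) S.hp0.le)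
      (by positivity)
      (add_le_add (max_le_max hDs.le le_rfl) h12)
  have hJle : (∫ s in u..t', S.Z ε₁ s) ≤ ∫ s in u..t', S.Z ε₂ s := by
    apply intervalIntegral.integral_mono_ae_restrict hult.le
      (S.ZInt h1 u t') (S.ZInt h2 u t')
    refine (MeasureTheory.ae_restrict_iff' measurableSet_Icc).mpr ?_
    filter_upwards [hne_ae] with s hsne hsmem
    have hus : u < s := lt_of_le_of_ne hsmem.1 (Ne.symm hsne)
    have := hkey s hus hsmem.2
    simp only [hD] at this
    linarith
  have hDt' : D t' - D u = S.a * ((∫ s in u..t', S.F ε₂ s) - ∫ s in u..t', S.F ε₁ s)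
      - S.b * ((∫ s in u..t', S.Z ε₂ s) - ∫ s in u..t', S.Z ε₁ s) := by
    simp only [hD]
    rw [e1t, e1u, e2t, e2u, ← hF1, ← hF2, ← hZ1, ← hZ2]
    ring
  have hs1 : S.a * ((∫ s in u..t', S.F ε₂ s) - ∫ s in u..t', S.F ε₁ s) ≤ 0 := by
    apply mul_nonpos_of_nonneg_of_nonpos S.ha.le
    linarith
  have hs2 : 0 ≤ S.b * ((∫ s in u..t', S.Z ε₂ s) - ∫ s in u..t', S.Z ε₁ s) := by
    apply mul_nonneg S.hb
    linarith
  linarith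

end CIRSetup
noncomputable def ceps (n : ℕ) : ℝ := 1 / (n + 1)

lemma ceps_pos (n : ℕ) : 0 < ceps n := by unfold ceps; positivity

lemma ceps_le_one (n : ℕ) : ceps n ≤ 1 := by
  unfold ceps
  rw [div_le_one (by positivity)]
  have : (0:ℝ) ≤ n := Nat.cast_nonneg n
  linarith

lemma ceps_anti {n m : ℕ} (h : n ≤ m) : ceps m ≤ ceps n := by
  unfold ceps
  apply one_div_le_one_div_of_le (by positivity)
  have : (n:ℝ) ≤ m := Nat.cast_le.2 h
  linarith

lemma ceps_tendsto : Filter.Tendsto ceps Filter.atTop (nhdsWithin 0 (Set.Ioi 0)) := by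
  rw [tendsto_nhdsWithin_iff]
  exact ⟨tendsto_one_div_add_atTop_nhds_zero_nat,
    Filter.Eventually.of_forall fun n => ceps_pos n⟩

namespace CIRSetup

variable (S : CIRSetup)

noncomputable def phi (n : ℕ) (s : ℝ) : ℝ := S.Z (ceps n) s

lemma contphi (n : ℕ) : Continuous (S.phi n) := S.contZ (ceps_pos n)

lemma phimono {n m : ℕ} (h : n ≤ m) (t : ℝ) : S.phi n t ≤ S.phi m t :=
  S.mono_eps (ceps_pos m) (ceps_anti h) t

lemma tendphi (t : ℝ) :
    Filter.Tendsto (fun n => S.phi n t) Filter.atTop (nhds (S.Xb t)) :=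
  (S.hX (max t 0) (le_max_right _ _)).comp ceps_tendsto

lemma phi_le_Xb (n : ℕ) (t : ℝ) : S.phi n t ≤ S.Xb t :=
  ge_of_tendsto (S.tendphi t) (Filter.eventually_atTop.2 ⟨n, fun m hm => S.phimono hm t⟩)

lemma Xb_meas : Measurable S.Xb :=
  measurable_of_tendsto_metrizable' Filter.atTop (fun n => (S.contphi n).measurable)
    (tendsto_pi_nhds.2 S.tendphi)

lemma Xb0 : S.Xb 0 = S.X0 := by
  refine tendsto_nhds_unique (S.tendphi 0) ?_
  have h : ∀ n : ℕ, S.phi n 0 = S.X0 := fun n => S.Z0 (ceps_pos n)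
  simp only [h]
  exact tendsto_const_nhds

lemma upper_bound {T : ℝ} (hT : 0 ≤ T) :
    ∃ M : ℝ, S.X0 ≤ M ∧ (∀ ε, 0 < ε → ∀ t ∈ Icc (0:ℝ) T, S.Z ε t ≤ M) := by
  obtain ⟨G, hG⟩ := isCompact_Icc.exists_bound_of_continuousOn
    (S.hgc.mono (fun x (hx : x ∈ Icc (0:ℝ) T) => hx.1))
  have hG0 : 0 ≤ G := le_trans (norm_nonneg _) (hG 0 ⟨le_rfl, hT⟩)
  set c := max 1 S.X0 with hc
  have h1c : 1 ≤ c := le_max_left _ _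
  set B := ∫ s in (0:ℝ)..T, s ^ S.p with hB
  have hB0 : 0 ≤ B := intervalIntegral.integral_nonneg hT
    (fun s hs => Real.rpow_nonneg hs.1 _)
  refine ⟨c + S.a * B + 2 * S.sg * G, ?_, ?_⟩
  · have : S.X0 ≤ c := le_max_right _ _
    nlinarith [S.ha.le, S.hsg.le]
  intro ε hε t ht
  have ht0 : 0 ≤ t := ht.1
  have hcM : c ≤ c + S.a * B + 2 * S.sg * G := by nlinarith [S.ha.le, S.hsg.le]
  rcases le_or_gt (S.Z ε t) c with h | h
  · linarith
  set Sset : Set ℝ := Icc 0 t ∩ (S.Z ε) ⁻¹' (Iic c) with hSset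
  have hclosed : IsClosed Sset :=
    isClosed_Icc.inter (isClosed_Iic.preimage (S.contZ hε))
  have hne : (0:ℝ) ∈ Sset := by
    refine ⟨⟨le_refl _, ht0⟩, ?_⟩
    simp only [mem_preimage, mem_Iic]
    rw [S.Z0 hε]
    exact le_max_right _ _
  have hbdd : BddAbove Sset := BddAbove.mono inter_subset_left bddAbove_Icc
  set u := sSup Sset with hudef
  have hu : u ∈ Sset := hclosed.csSup_mem ⟨0, hne⟩ hbdd
  have hu0 : 0 ≤ u := hu.1.1
  have hut : u ≤ t := hu.1.2
  have hZu : S.Z ε u ≤ c := hu.2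
  have hkey : ∀ s, u < s → s ≤ t → c < S.Z ε s := by
    intro s hus hst
    by_contra hns
    push_neg at hns
    exact absurd (le_csSup hbdd ⟨⟨le_trans hu0 hus.le, hst⟩, hns⟩) (not_le.2 hus)
  have hult : u < t := by
    rcases lt_or_eq_of_le hut with h' | h'
    · exact h'
    · rw [h'] at hZu; linarith
  have hne_ae : ∀ᵐ (s : ℝ) ∂(volume), s ≠ u := by
    simp [MeasureTheory.ae_iff, Real.volume_singleton]
  have hrpInt : ∀ t₁ t₂ : ℝ, IntervalIntegrable (fun s : ℝ => s ^ S.p) volume t₁ t₂ :=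
    fun t₁ t₂ => intervalIntegral.intervalIntegrable_rpow' S.hp1
  -- bound for the singular integral
  have step1 : (∫ s in u..t, S.F ε s) ≤ ∫ s in u..t, s ^ S.p := by
    apply intervalIntegral.integral_mono_ae_restrict hult.le
      (S.FInt hε hu0 ht0) (hrpInt u t)
    refine (MeasureTheory.ae_restrict_iff' measurableSet_Icc).mpr ?_
    filter_upwards [hne_ae] with s hsne hsmem
    have hus : u < s := lt_of_le_of_ne hsmem.1 (Ne.symm hsne)
    have hs0 : 0 < s := lt_of_le_of_lt hu0 hus
    have hcs : c < S.Z ε s := hkey s hus hsmem.2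
    have hden : 1 ≤ max (S.Z ε s) 0 + ε := by
      have := le_max_left (S.Z ε s) 0
      linarith
    have h' := div_le_div₀ (Real.rpow_nonneg hs0.le S.p)
      (Real.rpow_le_rpow_of_nonpos hs0 (le_add_of_nonneg_right hε.le) S.hp0.le)
      one_pos hden
    rwa [div_one] at h'
  have step2 : (∫ s in u..t, s ^ S.p) ≤ B := by
    have i1 : (∫ s in (0:ℝ)..u, s ^ S.p) + (∫ s in u..t, s ^ S.p)
        = ∫ s in (0:ℝ)..t, s ^ S.p :=
      intervalIntegral.integral_add_adjacent_intervals (hrpInt 0 u) (hrpInt u t)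
    have i2 : (∫ s in (0:ℝ)..t, s ^ S.p) + (∫ s in t..T, s ^ S.p)
        = ∫ s in (0:ℝ)..T, s ^ S.p :=
      intervalIntegral.integral_add_adjacent_intervals (hrpInt 0 t) (hrpInt t T)
    have n1 : 0 ≤ ∫ s in (0:ℝ)..u, s ^ S.p :=
      intervalIntegral.integral_nonneg hu0 (fun s hs => Real.rpow_nonneg hs.1 _)
    have n2 : 0 ≤ ∫ s in t..T, s ^ S.p :=
      intervalIntegral.integral_nonneg ht.2
        (fun s hs => Real.rpow_nonneg (le_trans ht0 hs.1) _)
    rw [hB]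
    linarith
  have hJ : 0 ≤ ∫ s in u..t, S.Z ε s := by
    have h0 : (∫ s in u..t, (0:ℝ)) ≤ ∫ s in u..t, S.Z ε s := by
      apply intervalIntegral.integral_mono_ae_restrict hult.le
        intervalIntegrable_const (S.ZInt hε u t)
      refine (MeasureTheory.ae_restrict_iff' measurableSet_Icc).mpr ?_
      filter_upwards [hne_ae] with s hsne hsmem
      have hus : u < s := lt_of_le_of_ne hsmem.1 (Ne.symm hsne)
      have := hkey s hus hsmem.2
      linarith
    simpa using h0
  have et := S.eqnZ hε ht0
  have eu := S.eqnZ hε hu0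
  have hFsplit : (∫ s in (0:ℝ)..t, S.F ε s) - (∫ s in (0:ℝ)..u, S.F ε s)
      = ∫ s in u..t, S.F ε s :=
    intervalIntegral.integral_interval_sub_left (S.FInt hε le_rfl ht0) (S.FInt hε le_rfl hu0)
  have hZsplit : (∫ s in (0:ℝ)..t, S.Z ε s) - (∫ s in (0:ℝ)..u, S.Z ε s)
      = ∫ s in u..t, S.Z ε s :=
    intervalIntegral.integral_interval_sub_left (S.ZInt hε 0 t) (S.ZInt hε 0 u)
  have hgt : |S.g t| ≤ G := by
    have := hG t ⟨ht0, ht.2⟩; rwa [Real.norm_eq_abs] at this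
  have hgu : |S.g u| ≤ G := by
    have := hG u ⟨hu0, le_trans hut ht.2⟩; rwa [Real.norm_eq_abs] at this
  have hgdiff : S.g t - S.g u ≤ 2 * G := by
    have h1 := abs_le.1 hgt
    have h2 := abs_le.1 hgu
    linarith
  have hZt : S.Z ε t = S.Z ε u + S.a * (∫ s in u..t, S.F ε s)
      - S.b * (∫ s in u..t, S.Z ε s) + S.sg * (S.g t - S.g u) := by
    rw [et, eu, ← hFsplit, ← hZsplit]
    ring
  have b1 : S.a * (∫ s in u..t, S.F ε s) ≤ S.a * B :=
    mul_le_mul_of_nonneg_left (le_trans step1 step2) S.ha.le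
  have b2 : 0 ≤ S.b * (∫ s in u..t, S.Z ε s) := mul_nonneg S.hb hJ
  have b3 : S.sg * (S.g t - S.g u) ≤ S.sg * (2 * G) :=
    mul_le_mul_of_nonneg_left hgdiff S.hsg.le
  rw [hZt]
  nlinarith

lemma bounds {T : ℝ} (hT : 0 ≤ T) :
    ∃ m M : ℝ, (∀ n : ℕ, ∀ t ∈ Icc (0:ℝ) T, S.phi n t ∈ Icc m M) ∧
      (∀ t ∈ Icc (0:ℝ) T, S.Xb t ∈ Icc m M) := by
  obtain ⟨s₀, hs₀, hmin⟩ := isCompact_Icc.exists_isMinOn (nonempty_Icc.2 hT)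
    ((S.contZ one_pos).continuousOn : ContinuousOn (S.Z 1) (Icc 0 T))
  obtain ⟨M, _, hup⟩ := S.upper_bound hT
  refine ⟨S.Z 1 s₀, M, ?_, ?_⟩
  · intro n t ht
    constructor
    · exact le_trans (hmin ht) (S.mono_eps (ceps_pos n) (ceps_le_one n) t)
    · exact hup (ceps n) (ceps_pos n) t ht
  · intro t ht
    constructor
    · exact le_trans (le_trans (hmin ht) (S.mono_eps (ceps_pos 0) (ceps_le_one 0) t))
        (S.phi_le_Xb 0 t)
    · exact le_of_tendsto (S.tendphi t)
        (Filter.Eventually.of_forall fun n => hup (ceps n) (ceps_pos n) t ht)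

end CIRSetup
namespace CIRSetup

variable (S : CIRSetup)

lemma posLB {u : ℝ} (hu : 0 ≤ u) (hpos : ∀ s ∈ Icc (0:ℝ) u, 0 < S.Xb s) :
    ∃ δ : ℝ, 0 < δ ∧ ∃ N : ℕ, ∀ n, N ≤ n → ∀ s ∈ Icc (0:ℝ) u, δ ≤ S.phi n s := by
  have hcover : Icc (0:ℝ) u ⊆ ⋃ n : ℕ, (S.phi n) ⁻¹' (Ioi 0) := by
    intro s hs
    have hmem : Ioi (0:ℝ) ∈ nhds (S.Xb s) := Ioi_mem_nhds (hpos s hs)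
    obtain ⟨n, hn⟩ := ((S.tendphi s).eventually_mem hmem).exists
    exact mem_iUnion.2 ⟨n, hn⟩
  have hdir : Directed (fun x1 x2 : Set ℝ => x1 ⊆ x2) (fun n => (S.phi n) ⁻¹' (Ioi 0)) := by
    intro n m
    refine ⟨max n m, ?_, ?_⟩
    · intro x hx
      exact lt_of_lt_of_le hx (S.phimono (le_max_left n m) x)
    · intro x hx
      exact lt_of_lt_of_le hx (S.phimono (le_max_right n m) x)
  obtain ⟨N, hN⟩ := isCompact_Icc.elim_directed_cover _
    (fun n => isOpen_Ioi.preimage (S.contphi n)) hcover hdir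
  obtain ⟨s₀, hs₀, hmin⟩ := isCompact_Icc.exists_isMinOn (nonempty_Icc.2 hu)
    (S.contphi N).continuousOn
  exact ⟨S.phi N s₀, hN hs₀, N, fun n hn s hs => le_trans (hmin hs) (S.phimono hn s)⟩

lemma XbInt {t : ℝ} (ht : 0 ≤ t) : IntegrableOn S.Xb (Ioc 0 t) volume := by
  obtain ⟨m, M, _, hXbnd⟩ := S.bounds ht
  refine Integrable.mono' (g := fun _ => max |m| |M|)
    (integrableOn_const measure_Ioc_lt_top.ne)
    S.Xb_meas.aestronglyMeasurable ?_
  refine (MeasureTheory.ae_restrict_iff' measurableSet_Ioc).mpr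
    (Filter.Eventually.of_forall ?_)
  intro s hs
  have hb := hXbnd s ⟨hs.1.le, hs.2⟩
  rw [Real.norm_eq_abs]
  rcases abs_cases (S.Xb s) with ⟨he, _⟩ | ⟨he, _⟩ <;> rw [he]
  · exact le_trans hb.2 (le_trans (le_abs_self M) (le_max_right _ _))
  · have : -m ≤ |m| := neg_le_abs m
    have := hb.1
    have h3 : -S.Xb s ≤ |m| := by linarith
    exact le_trans h3 (le_max_left _ _)

lemma tendJ {t : ℝ} (ht : 0 ≤ t) :
    Filter.Tendsto (fun n => ∫ s in Ioc (0:ℝ) t, S.phi n s) Filter.atTop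
      (nhds (∫ s in Ioc (0:ℝ) t, S.Xb s)) := by
  obtain ⟨m, M, hphib, _⟩ := S.bounds ht
  apply MeasureTheory.tendsto_integral_of_dominated_convergence
    (bound := fun _ => max |m| |M|)
  · exact fun n => (S.contphi n).aestronglyMeasurable
  · exact integrableOn_const measure_Ioc_lt_top.ne
  · intro n
    refine (MeasureTheory.ae_restrict_iff' measurableSet_Ioc).mpr
      (Filter.Eventually.of_forall ?_)
    intro s hs
    have hb := hphib n s ⟨hs.1.le, hs.2⟩
    rw [Real.norm_eq_abs]
    rcases abs_cases (S.phi n s) with ⟨he, _⟩ | ⟨he, _⟩ <;> rw [he]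
    · exact le_trans hb.2 (le_trans (le_abs_self M) (le_max_right _ _))
    · have : -m ≤ |m| := neg_le_abs m
      have := hb.1
      have h3 : -S.phi n s ≤ |m| := by linarith
      exact le_trans h3 (le_max_left _ _)
  · exact Filter.Eventually.of_forall fun s => S.tendphi s

lemma ptF {s : ℝ} (hs : 0 < s) (hXs : 0 < S.Xb s) :
    Filter.Tendsto (fun n => S.F (ceps n) s) Filter.atTop
      (nhds (s ^ S.p / S.Xb s)) := by
  have hce : Filter.Tendsto (fun n : ℕ => ceps n) Filter.atTop (nhds 0) :=
    tendsto_one_div_add_atTop_nhds_zero_nat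
  have hnum : Filter.Tendsto (fun n => (s + ceps n) ^ S.p) Filter.atTop
      (nhds (s ^ S.p)) := by
    have h0 : Filter.Tendsto (fun n : ℕ => s + ceps n) Filter.atTop (nhds s) := by
      simpa using tendsto_const_nhds.add hce
    exact ((Real.continuousAt_rpow_const s S.p (Or.inl hs.ne')).tendsto).comp h0
  have hden : Filter.Tendsto (fun n => max (S.phi n s) 0 + ceps n) Filter.atTop
      (nhds (S.Xb s)) := by
    have h1 : Filter.Tendsto (fun n => max (S.phi n s) 0) Filter.atTop
        (nhds (max (S.Xb s) 0)) := (S.tendphi s).max tendsto_const_nhds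
    have h2 := h1.add hce
    rw [max_eq_left hXs.le] at h2
    simpa using h2
  exact hnum.div hden hXs.ne'

lemma FIntOn {ε : ℝ} (hε : 0 < ε) {t : ℝ} (ht : 0 ≤ t) :
    IntegrableOn (S.F ε) (Ioc 0 t) volume :=
  (intervalIntegrable_iff_integrableOn_Ioc_of_le ht).1 (S.FInt hε le_rfl ht)

lemma stage1 {u : ℝ} (hu : 0 ≤ u) (hpos : ∀ s ∈ Icc (0:ℝ) u, 0 < S.Xb s) :
    S.Xb u = S.X0 + S.a * (∫ s in (0:ℝ)..u, s ^ S.p / S.Xb s)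
      - S.b * (∫ s in (0:ℝ)..u, S.Xb s) + S.sg * S.g u := by
  obtain ⟨δ, hδ, N, hδN⟩ := S.posLB hu hpos
  have hIshift : Filter.Tendsto
      (fun k : ℕ => ∫ s in Ioc (0:ℝ) u, S.F (ceps (k + N)) s) Filter.atTop
      (nhds (∫ s in Ioc (0:ℝ) u, s ^ S.p / S.Xb s)) := by
    apply MeasureTheory.tendsto_integral_of_dominated_convergence
      (bound := fun s => s ^ S.p / δ)
    · intro k
      exact ((S.FcontOn (ceps_pos _)).aestronglyMeasurable measurableSet_Ici).mono_measure
        (Measure.restrict_mono (fun x (hx : x ∈ Ioc (0:ℝ) u) => hx.1.le) le_rfl)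
    · exact (intervalIntegrable_iff_integrableOn_Ioc_of_le hu).1
        ((intervalIntegral.intervalIntegrable_rpow' S.hp1).div_const δ)
    · intro k
      refine (MeasureTheory.ae_restrict_iff' measurableSet_Ioc).mpr
        (Filter.Eventually.of_forall ?_)
      intro s hs
      have hs0 : 0 < s := hs.1
      have hφ : δ ≤ S.phi (k + N) s := hδN (k + N) (Nat.le_add_left N k) s ⟨hs0.le, hs.2⟩
      have hF0 : 0 ≤ S.F (ceps (k + N)) s := S.Fnonneg (ceps_pos _) hs0.le
      rw [Real.norm_eq_abs, abs_of_nonneg hF0]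
      have hden : δ ≤ max (S.Z (ceps (k + N)) s) 0 + ceps (k + N) := by
        have h1 : S.phi (k + N) s ≤ max (S.Z (ceps (k + N)) s) 0 := le_max_left _ _
        have h2 := (ceps_pos (k + N)).le
        have := hφ
        unfold phi at this
        linarith [le_max_left (S.Z (ceps (k + N)) s) (0:ℝ)]
      exact div_le_div₀ (Real.rpow_nonneg hs0.le _)
        (Real.rpow_le_rpow_of_nonpos hs0 (le_add_of_nonneg_right (ceps_pos _).le) S.hp0.le)
        hδ hden
    · refine (MeasureTheory.ae_restrict_iff' measurableSet_Ioc).mpr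
        (Filter.Eventually.of_forall ?_)
      intro s hs
      exact (S.ptF hs.1 (hpos s ⟨hs.1.le, hs.2⟩)).comp (tendsto_add_atTop_nat N)
  have hI : Filter.Tendsto (fun n : ℕ => ∫ s in Ioc (0:ℝ) u, S.F (ceps n) s)
      Filter.atTop (nhds (∫ s in Ioc (0:ℝ) u, s ^ S.p / S.Xb s)) :=
    (tendsto_add_atTop_iff_nat N).1 hIshift
  have hJ := S.tendJ hu
  have hcomb := (((hI.const_mul S.a).const_add S.X0).sub
      (hJ.const_mul S.b)).add_const (S.sg * S.g u)
  have heqn : ∀ n : ℕ, S.phi n u = S.X0 + S.a * (∫ s in Ioc (0:ℝ) u, S.F (ceps n) s)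
      - S.b * (∫ s in Ioc (0:ℝ) u, S.phi n s) + S.sg * S.g u := by
    intro n
    have h := S.eqnZ (ceps_pos n) hu
    rwa [intervalIntegral.integral_of_le hu, intervalIntegral.integral_of_le hu] at h
  have hfin := tendsto_nhds_unique (S.tendphi u)
    (hcomb.congr (fun n => (heqn n).symm))
  rw [hfin, intervalIntegral.integral_of_le hu, intervalIntegral.integral_of_le hu]

end CIRSetup
namespace CIRSetup

variable (S : CIRSetup)

lemma stage2 {t : ℝ} (ht : 0 < t) (hpos : ∀ s ∈ Ico (0:ℝ) t, 0 < S.Xb s) :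
    S.Xb t = S.X0 + S.a * (∫ s in (0:ℝ)..t, s ^ S.p / S.Xb s)
      - S.b * (∫ s in (0:ℝ)..t, S.Xb s) + S.sg * S.g t
    ∧ Filter.Tendsto S.Xb (nhdsWithin t (Iio t)) (nhds (S.Xb t)) := by
  have ht0 : (0:ℝ) ≤ t := ht.le
  set ν := volume.restrict (Ioc (0:ℝ) t) with hν
  set fR : ℝ → ℝ := fun s => s ^ S.p / S.Xb s with hfR
  have hJ := S.tendJ ht0
  set Jv := ∫ s in Ioc (0:ℝ) t, S.Xb s with hJv
  set L := (S.Xb t - S.X0 + S.b * Jv - S.sg * S.g t) / S.a with hL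
  have hIL : Filter.Tendsto (fun n : ℕ => ∫ s in Ioc (0:ℝ) t, S.F (ceps n) s)
      Filter.atTop (nhds L) := by
    have h1 : ∀ n : ℕ, (∫ s in Ioc (0:ℝ) t, S.F (ceps n) s) =
        (S.phi n t - S.X0 + S.b * (∫ s in Ioc (0:ℝ) t, S.phi n s)
          - S.sg * S.g t) / S.a := by
      intro n
      have h := S.eqnZ (ceps_pos n) ht0
      rw [intervalIntegral.integral_of_le ht0, intervalIntegral.integral_of_le ht0] at h
      rw [eq_div_iff S.ha.ne']
      have h2 : S.phi n t = S.Z (ceps n) t := rfl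
      have h3 : (∫ s in Ioc (0:ℝ) t, S.phi n s) = ∫ x in Ioc (0:ℝ) t, S.Z (ceps n) x := rfl
      rw [h2, h3, h]
      ring
    have h2 : Filter.Tendsto (fun n : ℕ =>
        (S.phi n t - S.X0 + S.b * (∫ s in Ioc (0:ℝ) t, S.phi n s)
          - S.sg * S.g t) / S.a) Filter.atTop (nhds L) :=
      ((((S.tendphi t).sub_const S.X0).add (hJ.const_mul S.b)).sub_const
        (S.sg * S.g t)).div_const S.a
    exact h2.congr (fun n => (h1 n).symm)
  have hL0 : 0 ≤ L :=
    ge_of_tendsto' hIL (fun n => MeasureTheory.setIntegral_nonneg measurableSet_Ioc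
      (fun s hs => S.Fnonneg (ceps_pos n) hs.1.le))
  have hne_ae : ∀ᵐ (s : ℝ) ∂(volume), s ≠ t := by
    simp [MeasureTheory.ae_iff, Real.volume_singleton]
  have hptae : ∀ᵐ s ∂ν, Filter.Tendsto (fun n => S.F (ceps n) s) Filter.atTop
      (nhds (fR s)) ∧ 0 < S.Xb s ∧ 0 < s := by
    filter_upwards [MeasureTheory.ae_restrict_mem measurableSet_Ioc,
      MeasureTheory.ae_restrict_of_ae hne_ae] with s hs hsne
    have hs0 : 0 < s := hs.1
    have hst : s < t := lt_of_le_of_ne hs.2 hsne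
    have hXs := hpos s ⟨hs0.le, hst⟩
    exact ⟨S.ptF hs0 hXs, hXs, hs0⟩
  have hmeasF : ∀ n : ℕ, AEMeasurable (fun s => ENNReal.ofReal (S.F (ceps n) s)) ν :=
    fun n => ENNReal.measurable_ofReal.comp_aemeasurable
      (((S.FcontOn (ceps_pos n)).aemeasurable measurableSet_Ici).mono_measure
        (Measure.restrict_mono (fun x (hx : x ∈ Ioc (0:ℝ) t) => hx.1.le) le_rfl))
  have hlimsup : (∫⁻ s, ENNReal.ofReal (fR s) ∂ν) ≤ ENNReal.ofReal L := by
    have h1 : (∫⁻ s, ENNReal.ofReal (fR s) ∂ν)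
        = ∫⁻ s, Filter.liminf (fun n => ENNReal.ofReal (S.F (ceps n) s)) Filter.atTop ∂ν := by
      apply MeasureTheory.lintegral_congr_ae
      filter_upwards [hptae] with s hs
      exact ((ENNReal.tendsto_ofReal hs.1).liminf_eq).symm
    rw [h1]
    refine le_trans (MeasureTheory.lintegral_liminf_le' hmeasF) (le_of_eq ?_)
    have heq : ∀ n : ℕ, (∫⁻ s, ENNReal.ofReal (S.F (ceps n) s) ∂ν)
        = ENNReal.ofReal (∫ s in Ioc (0:ℝ) t, S.F (ceps n) s) := fun n =>
      (MeasureTheory.ofReal_integral_eq_lintegral_ofReal (S.FIntOn (ceps_pos n) ht0)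
        ((MeasureTheory.ae_restrict_iff' measurableSet_Ioc).mpr
          (Filter.Eventually.of_forall fun s hs => S.Fnonneg (ceps_pos n) hs.1.le))).symm
    simp only [heq]
    exact (ENNReal.tendsto_ofReal hIL).liminf_eq
  have hfRnn : 0 ≤ᵐ[ν] fR := by
    filter_upwards [hptae] with s hs
    exact div_nonneg (Real.rpow_nonneg hs.2.2.le _) hs.2.1.le
  have hfRmeas : AEMeasurable fR ν := by
    have h1 : AEMeasurable (fun s : ℝ => s ^ S.p) ν := by
      have h2 : ContinuousOn (fun s : ℝ => s ^ S.p) (Ioi 0) := fun x hx =>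
        (Real.continuousAt_rpow_const x S.p (Or.inl (ne_of_gt hx))).continuousWithinAt
      exact (h2.aemeasurable measurableSet_Ioi).mono_measure
        (Measure.restrict_mono (fun x (hx : x ∈ Ioc (0:ℝ) t) => hx.1) le_rfl)
    exact h1.div S.Xb_meas.aemeasurable
  have hInt : IntegrableOn fR (Ioc 0 t) volume := by
    refine ⟨hfRmeas.aestronglyMeasurable, ?_⟩
    have hnrm : (∫⁻ s, ‖fR s‖ₑ ∂ν) = ∫⁻ s, ENNReal.ofReal (fR s) ∂ν :=
      MeasureTheory.lintegral_congr_ae (hfRnn.mono fun s hs => Real.enorm_eq_ofReal hs)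
    show (∫⁻ s, ‖fR s‖ₑ ∂ν) < ⊤
    rw [hnrm]
    exact lt_of_le_of_lt hlimsup ENNReal.ofReal_lt_top
  have hIle : (∫ s in Ioc (0:ℝ) t, fR s) ≤ L := by
    rw [MeasureTheory.integral_eq_lintegral_of_nonneg_ae hfRnn hfRmeas.aestronglyMeasurable]
    calc (∫⁻ s, ENNReal.ofReal (fR s) ∂ν).toReal
        ≤ (ENNReal.ofReal L).toReal := ENNReal.toReal_mono ENNReal.ofReal_ne_top hlimsup
      _ = L := ENNReal.toReal_ofReal hL0
  -- left limit
  set P : ℝ → ℝ := fun x => ∫ s in Ioc (0:ℝ) x, fR s with hP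
  set Q : ℝ → ℝ := fun x => ∫ s in Ioc (0:ℝ) x, S.Xb s with hQ
  have hPc : ContinuousOn P (Icc 0 t) :=
    intervalIntegral.continuousOn_primitive ((integrableOn_Icc_iff_integrableOn_Ioc (f := fR)).2 hInt)
  have hQc : ContinuousOn Q (Icc 0 t) :=
    intervalIntegral.continuousOn_primitive
      ((integrableOn_Icc_iff_integrableOn_Ioc (f := S.Xb)).2 (S.XbInt ht0))
  have hIoo : nhdsWithin t (Iio t) = nhdsWithin t (Ioo 0 t) :=
    (nhdsWithin_Ioo_eq_nhdsLT ht).symm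
  have hmemIoo : Ioo (0:ℝ) t ∈ nhdsWithin t (Iio t) := by
    rw [hIoo]; exact self_mem_nhdsWithin
  have hPt : Filter.Tendsto P (nhdsWithin t (Iio t)) (nhds (P t)) := by
    have h1 : Filter.Tendsto P (nhdsWithin t (Icc 0 t)) (nhds (P t)) :=
      hPc t ⟨ht0, le_rfl⟩
    rw [hIoo]
    exact h1.mono_left (nhdsWithin_mono t Ioo_subset_Icc_self)
  have hQt : Filter.Tendsto Q (nhdsWithin t (Iio t)) (nhds (Q t)) := by
    have h1 : Filter.Tendsto Q (nhdsWithin t (Icc 0 t)) (nhds (Q t)) :=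
      hQc t ⟨ht0, le_rfl⟩
    rw [hIoo]
    exact h1.mono_left (nhdsWithin_mono t Ioo_subset_Icc_self)
  have hgt : Filter.Tendsto S.g (nhdsWithin t (Iio t)) (nhds (S.g t)) := by
    have h1 : Filter.Tendsto S.g (nhdsWithin t (Ici 0)) (nhds (S.g t)) :=
      S.hgc t ht0
    rw [hIoo]
    exact h1.mono_left (nhdsWithin_mono t (fun x hx => hx.1.le))
  set l := S.X0 + S.a * P t - S.b * Q t + S.sg * S.g t with hldef
  have htendXb : Filter.Tendsto S.Xb (nhdsWithin t (Iio t)) (nhds l) := by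
    have hcomb : Filter.Tendsto (fun x => S.X0 + S.a * P x - S.b * Q x + S.sg * S.g x)
        (nhdsWithin t (Iio t)) (nhds l) :=
      (((hPt.const_mul S.a).const_add S.X0).sub (hQt.const_mul S.b)).add
        (hgt.const_mul S.sg)
    apply hcomb.congr'
    filter_upwards [hmemIoo] with x hx
    have h1 := S.stage1 hx.1.le (fun s hs => hpos s ⟨hs.1, lt_of_le_of_lt hs.2 hx.2⟩)
    rw [intervalIntegral.integral_of_le hx.1.le, intervalIntegral.integral_of_le hx.1.le] at h1
    exact h1.symm
  have hub : ∀ n : ℕ, S.phi n t ≤ l := by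
    intro n
    have h1 : Filter.Tendsto (S.phi n) (nhdsWithin t (Iio t)) (nhds (S.phi n t)) :=
      ((S.contphi n).tendsto t).mono_left nhdsWithin_le_nhds
    exact le_of_tendsto_of_tendsto' h1 htendXb (fun x => S.phi_le_Xb n x)
  have hXble : S.Xb t ≤ l :=
    le_of_tendsto (S.tendphi t) (Filter.Eventually.of_forall hub)
  have hXbeq : S.Xb t = S.X0 + S.a * L - S.b * Jv + S.sg * S.g t := by
    have haL : S.a * L = S.Xb t - S.X0 + S.b * Jv - S.sg * S.g t := by
      rw [hL, mul_div_cancel₀ _ S.ha.ne']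
    linarith
  have hge : l ≤ S.Xb t := by
    rw [hXbeq, hldef]
    have h2 : S.a * P t ≤ S.a * L := mul_le_mul_of_nonneg_left hIle S.ha.le
    linarith
  have hXbt : S.Xb t = l := le_antisymm hXble hge
  constructor
  · rw [intervalIntegral.integral_of_le ht0, intervalIntegral.integral_of_le ht0, hXbt]
  · rw [hXbt]
    exact htendXb

end CIRSetup
/-- **Remark 3.10.** On the connected component of `{t ≥ 0 : X_t > 0}` containing
`0` (with right endpoint `β₀`), `X` satisfies the singular equation
`X_t = X₀ + a∫₀ᵗ s^{2H-1}/X_s ds − b∫₀ᵗ X_s ds + σ g(t)`; a point `t ≥ 0` belongs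
to `[0, β₀]` iff `X > 0` on `[0, t)`.  Moreover, if `β₀ < ∞` (encoded by:
`X > 0` on `[0, β₀)` but not at `β₀`), then `lim_{t↑β₀} X_t = 0 = X_{β₀}`. -/
theorem first_component_equation
    (X₀ a b σ H : ℝ) (hX₀ : 0 < X₀) (ha : 0 < a) (hb : 0 ≤ b) (hσ : 0 < σ)
    (hH0 : 0 < H) (hH : H < 1/2)
    (g : ℝ → ℝ) (hgc : ContinuousOn g (Set.Ici 0)) (hg0 : g 0 = 0)
    (Xe : ℝ → ℝ → ℝ)
    (hXe : ∀ ε > (0:ℝ), ∀ T > (0:ℝ), approxSol X₀ a b σ H g T ε (Xe ε))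
    (X : ℝ → ℝ)
    (hX : ∀ t ≥ (0:ℝ),
      Tendsto (fun ε => Xe ε t) (nhdsWithin 0 (Set.Ioi 0)) (nhds (X t)))
    (β : ℝ) (hβ0 : 0 < β) (hβH : β < H)
    (hgH : ∀ T > (0:ℝ), ∃ C > (0:ℝ), ∀ s ∈ Set.Icc (0:ℝ) T, ∀ t ∈ Set.Icc (0:ℝ) T,
      |g t - g s| ≤ C * |t - s| ^ β)
    :
    (∀ t ≥ (0:ℝ), (∀ s ∈ Set.Ico (0:ℝ) t, 0 < X s) →
      X t = X₀ + a * (∫ s in (0:ℝ)..t, s ^ (2 * H - 1) / X s)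
        - b * (∫ s in (0:ℝ)..t, X s) + σ * g t) ∧
    (∀ β₀ > (0:ℝ), (∀ s ∈ Set.Ico (0:ℝ) β₀, 0 < X s) → X β₀ ≤ 0 →
      Tendsto X (nhdsWithin β₀ (Set.Iio β₀)) (nhds 0) ∧ X β₀ = 0) := by
  set S : CIRSetup :=
    { X0 := X₀, a := a, b := b, sg := σ, H := H, g := g, Xe := Xe, X := X,
      hX0 := hX₀, ha := ha, hb := hb, hsg := hσ, hH0 := hH0, hH := hH,
      hgc := hgc, hg0 := hg0, hXe := hXe, hX := hX } with hS
  have hXb : ∀ t : ℝ, 0 ≤ t → S.Xb t = X t := by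
    intro t ht
    show X (max t 0) = X t
    rw [max_eq_left ht]
  constructor
  · intro t ht hpos
    rcases eq_or_lt_of_le ht with heq | hlt
    · rw [← heq]
      have h0 : X 0 = X₀ := by
        have h1 := S.Xb0
        rwa [hXb 0 le_rfl] at h1
      simp [intervalIntegral.integral_same, hg0, h0]
    · have hposb : ∀ s ∈ Ico (0:ℝ) t, 0 < S.Xb s := by
        intro s hs
        rw [hXb s hs.1]
        exact hpos s hs
      obtain ⟨heqn, -⟩ := S.stage2 hlt hposb
      rw [hXb t ht] at heqn
      have hint1 : (∫ s in (0:ℝ)..t, s ^ S.p / S.Xb s)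
          = ∫ s in (0:ℝ)..t, s ^ (2 * H - 1) / X s := by
        apply intervalIntegral.integral_congr
        intro s hs
        rw [uIcc_of_le ht] at hs
        show s ^ S.p / S.Xb s = s ^ (2 * H - 1) / X s
        rw [hXb s hs.1]
        rfl
      have hint2 : (∫ s in (0:ℝ)..t, S.Xb s) = ∫ s in (0:ℝ)..t, X s := by
        apply intervalIntegral.integral_congr
        intro s hs
        rw [uIcc_of_le ht] at hs
        exact hXb s hs.1
      rw [hint1, hint2] at heqn
      exact heqn
  · intro β₀ hβ₀ hpos hle
    have hposb : ∀ s ∈ Ico (0:ℝ) β₀, 0 < S.Xb s := by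
      intro s hs
      rw [hXb s hs.1]
      exact hpos s hs
    obtain ⟨-, htend⟩ := S.stage2 hβ₀ hposb
    have hmemIoo : Ioo (0:ℝ) β₀ ∈ nhdsWithin β₀ (Iio β₀) := by
      rw [← nhdsWithin_Ioo_eq_nhdsLT hβ₀]
      exact self_mem_nhdsWithin
    have hge : 0 ≤ S.Xb β₀ := by
      apply ge_of_tendsto htend
      filter_upwards [hmemIoo] with x hx
      exact (hposb x ⟨hx.1.le, hx.2⟩).le
    have hXeq : X β₀ = 0 := by
      apply le_antisymm hle
      rw [← hXb β₀ hβ₀.le]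
      exact hge
    refine ⟨?_, hXeq⟩
    have hcg : Tendsto X (nhdsWithin β₀ (Iio β₀)) (nhds (S.Xb β₀)) := by
      apply htend.congr'
      filter_upwards [hmemIoo] with x hx
      exact hXb x hx.1.le
    rwa [hXb β₀ hβ₀.le, hXeq] at hcg
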